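/- Assume (A2) and (D2) and that σ₂(S^{d-1}) > 0. Then the layered stable Lévy measure ν has the following moment behavior outside the unit ball: for every p ∈ (0, β), ∫_{{z : ‖z‖ > 1}} ‖z‖^p ν(dz) < ∞, while for every p ≥ β, ∫_{{z : ‖z‖ > 1}} ‖z‖^p ν(dz) = ∞. (Lévy-measure form of Proposition 2.3 on moments of layered stable distributions.) -/

import Mathlib

open MeasureTheory Set Filter
open scoped ENNReal

/-- Proposition 2.3 (moments), Lévy-measure form: under (A2), (D2) and
`σ₂(S^{d-1}) > 0`, the layered stable Lévy measure integrates `‖z‖^p` outside the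
unit ball iff `p < β`. -/
theorem layered_stable_moments
    (d : ℕ) (hd : 1 ≤ d)
    (σ : Measure (Metric.sphere (0 : EuclideanSpace ℝ (Fin d)) 1))
    [IsFiniteMeasure σ]
    (β : ℝ) (hβ : 0 < β)
    (q : ℝ → Metric.sphere (0 : EuclideanSpace ℝ (Fin d)) 1 → ℝ)
    (hq_meas : Measurable (Function.uncurry q))
    (hq_pos : ∀ r : ℝ, 0 < r → ∀ ξ, 0 < q r ξ)
    (c₂ C₂ : Metric.sphere (0 : EuclideanSpace ℝ (Fin d)) 1 → ℝ)
    (hc₂_nonneg : ∀ ξ, 0 ≤ c₂ ξ) (hc₂_int : Integrable c₂ σ)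
    (hA2 : ∀ ξ, Tendsto (fun r : ℝ => r ^ (β + 1) * q r ξ) atTop (nhds (c₂ ξ)))
    (hC₂_nonneg : ∀ ξ, 0 ≤ C₂ ξ) (hC₂_int : Integrable C₂ σ)
    (hD2 : ∀ ξ, ∀ r : ℝ, 1 ≤ r → q r ξ ≤ C₂ ξ * r ^ (-β - 1))
    (hσ₂_pos : 0 < ∫ ξ, c₂ ξ ∂σ) :
    (∀ p : ℝ, 0 < p → p < β →
      ∫⁻ ξ, (∫⁻ r in Ioi (1 : ℝ), ENNReal.ofReal (r ^ p * q r ξ)) ∂σ < ⊤) ∧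
    (∀ p : ℝ, β ≤ p →
      ∫⁻ ξ, (∫⁻ r in Ioi (1 : ℝ), ENNReal.ofReal (r ^ p * q r ξ)) ∂σ = ⊤) := by
  constructor
  · -- finite moments for p < β
    intro p hp hpβ
    set K : ℝ≥0∞ := ∫⁻ r in Ioi (1 : ℝ), ENNReal.ofReal (r ^ (p - β - 1)) with hKdef
    have hint : IntegrableOn (fun r : ℝ => r ^ (p - β - 1)) (Ioi 1) :=
      integrableOn_Ioi_rpow_of_lt (by linarith) zero_lt_one
    have hKlt : K < ⊤ := hint.lintegral_lt_top
    have hinner : ∀ ξ, (∫⁻ r in Ioi (1 : ℝ), ENNReal.ofReal (r ^ p * q r ξ))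
        ≤ ENNReal.ofReal (C₂ ξ) * K := by
      intro ξ
      have h1 : (∫⁻ r in Ioi (1 : ℝ), ENNReal.ofReal (r ^ p * q r ξ))
          ≤ ∫⁻ r in Ioi (1 : ℝ),
              ENNReal.ofReal (C₂ ξ) * ENNReal.ofReal (r ^ (p - β - 1)) := by
        refine setLIntegral_mono' measurableSet_Ioi fun r hr => ?_
        have hr1 : (1 : ℝ) ≤ r := le_of_lt hr
        have hr0 : (0 : ℝ) < r := lt_of_lt_of_le one_pos hr1
        rw [← ENNReal.ofReal_mul (hC₂_nonneg ξ)]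
        apply ENNReal.ofReal_le_ofReal
        have hd2 := hD2 ξ r hr1
        have step : r ^ p * q r ξ ≤ r ^ p * (C₂ ξ * r ^ (-β - 1)) :=
          mul_le_mul_of_nonneg_left hd2 (Real.rpow_nonneg hr0.le p)
        refine step.trans_eq ?_
        rw [mul_left_comm, ← Real.rpow_add hr0]
        ring_nf
      rw [lintegral_const_mul' _ _ ENNReal.ofReal_ne_top] at h1
      exact h1
    calc ∫⁻ ξ, (∫⁻ r in Ioi (1 : ℝ), ENNReal.ofReal (r ^ p * q r ξ)) ∂σ
        ≤ ∫⁻ ξ, ENNReal.ofReal (C₂ ξ) * K ∂σ := lintegral_mono hinner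
      _ = (∫⁻ ξ, ENNReal.ofReal (C₂ ξ) ∂σ) * K := by
          exact lintegral_mul_const'' K
            (ENNReal.measurable_ofReal.comp_aemeasurable hC₂_int.aemeasurable)
      _ < ⊤ := ENNReal.mul_lt_top hC₂_int.lintegral_lt_top hKlt
  · -- infinite moments for p ≥ β
    intro p hpβ
    -- measurable version of c₂
    have hm : AEMeasurable c₂ σ := hc₂_int.aemeasurable
    set g := hm.mk c₂ with hgdef
    have hg_meas : Measurable g := hm.measurable_mk
    have hg_ae : c₂ =ᵐ[σ] g := hm.ae_eq_mk
    set s : Set (Metric.sphere (0 : EuclideanSpace ℝ (Fin d)) 1) := {ξ | 0 < g ξ}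
      with hsdef
    have hs_meas : MeasurableSet s := measurableSet_lt measurable_const hg_meas
    have hσs : 0 < σ s := by
      by_contra h
      push_neg at h
      have hσs0 : σ s = 0 := le_antisymm h zero_le
      have hae0 : c₂ =ᵐ[σ] 0 := by
        have h1 : ∀ᵐ ξ ∂σ, ξ ∉ s := by
          rw [ae_iff]
          simpa using hσs0
        filter_upwards [h1, hg_ae] with ξ h1 h2
        have : g ξ ≤ 0 := not_lt.mp h1
        have : c₂ ξ ≤ 0 := h2 ▸ this
        exact le_antisymm this (hc₂_nonneg ξ)
      have : ∫ ξ, c₂ ξ ∂σ = 0 := by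
        rw [integral_congr_ae hae0]; simp
      exact absurd this (ne_of_gt hσ₂_pos)
    -- inner integral is infinite whenever c₂ ξ > 0
    have hinner : ∀ ξ, 0 < c₂ ξ →
        (∫⁻ r in Ioi (1 : ℝ), ENNReal.ofReal (r ^ p * q r ξ)) = ⊤ := by
      intro ξ hξ
      have hev : ∀ᶠ r in atTop, c₂ ξ / 2 < r ^ (β + 1) * q r ξ :=
        (hA2 ξ).eventually (eventually_gt_nhds (by linarith))
      obtain ⟨R₀, hR₀⟩ := hev.exists_forall_of_atTop
      set R : ℝ := max R₀ 2 with hRdef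
      have hR2 : (2 : ℝ) ≤ R := le_max_right _ _
      have hRpos : (0 : ℝ) < R := by linarith
      -- lower bound on Ioi R
      have hlow : ∀ r ∈ Ioi R,
          ENNReal.ofReal (c₂ ξ / 2 * r ^ (-1 : ℝ)) ≤ ENNReal.ofReal (r ^ p * q r ξ) := by
        intro r hr
        have hrR : R < r := hr
        have hr1 : (1 : ℝ) ≤ r := by linarith
        have hr0 : (0 : ℝ) < r := by linarith
        apply ENNReal.ofReal_le_ofReal
        have hq : c₂ ξ / 2 < r ^ (β + 1) * q r ξ :=
          hR₀ r (le_of_lt (lt_of_le_of_lt (le_max_left _ _) hrR))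
        have hrb : (0 : ℝ) < r ^ (β + 1) := Real.rpow_pos_of_pos hr0 _
        have hq2 : c₂ ξ / 2 * r ^ (-(β + 1)) ≤ q r ξ := by
          rw [Real.rpow_neg hr0.le]
          rw [mul_inv_le_iff₀ hrb, mul_comm (q r ξ)]
          exact hq.le
        calc c₂ ξ / 2 * r ^ (-1 : ℝ)
            ≤ c₂ ξ / 2 * r ^ (p - β - 1) := by
              apply mul_le_mul_of_nonneg_left _ (by linarith)
              exact Real.rpow_le_rpow_of_exponent_le hr1 (by linarith)
          _ = r ^ p * (c₂ ξ / 2 * r ^ (-(β + 1))) := by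
              rw [mul_left_comm, ← Real.rpow_add hr0]
              ring_nf
          _ ≤ r ^ p * q r ξ :=
              mul_le_mul_of_nonneg_left hq2 (Real.rpow_nonneg hr0.le p)
      -- the minorant has infinite integral on Ioi R
      have hnotint : ¬ IntegrableOn (fun r : ℝ => c₂ ξ / 2 * r ^ (-1 : ℝ)) (Ioi R) := by
        intro h
        have hcne : c₂ ξ ≠ 0 := ne_of_gt hξ
        have h2 : IntegrableOn (fun r : ℝ => r ^ (-1 : ℝ)) (Ioi R) := by
          have h3 := h.const_mul (2 / c₂ ξ)
          have heq : (fun r : ℝ => 2 / c₂ ξ * (c₂ ξ / 2 * r ^ (-1 : ℝ))) =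
              fun r : ℝ => r ^ (-1 : ℝ) := by
            funext r; field_simp
          rwa [heq] at h3
        rw [integrableOn_Ioi_rpow_iff hRpos] at h2
        linarith
      have htop : (∫⁻ r in Ioi R, ENNReal.ofReal (c₂ ξ / 2 * r ^ (-1 : ℝ))) = ⊤ := by
        by_contra h
        refine hnotint ((lintegral_ofReal_ne_top_iff_integrable
          (by fun_prop : Measurable (fun r : ℝ => c₂ ξ / 2 * r ^ (-1 : ℝ))).aestronglyMeasurable
            ?_).mp h)
        filter_upwards [ae_restrict_mem measurableSet_Ioi] with r hr
        have hr0 : (0 : ℝ) < r := lt_trans hRpos hr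
        positivity
      refine top_le_iff.mp ?_
      calc (⊤ : ℝ≥0∞) = ∫⁻ r in Ioi R, ENNReal.ofReal (c₂ ξ / 2 * r ^ (-1 : ℝ)) := htop.symm
        _ ≤ ∫⁻ r in Ioi R, ENNReal.ofReal (r ^ p * q r ξ) :=
            setLIntegral_mono' measurableSet_Ioi hlow
        _ ≤ ∫⁻ r in Ioi (1 : ℝ), ENNReal.ofReal (r ^ p * q r ξ) := by
            apply lintegral_mono_set
            exact Ioi_subset_Ioi (by linarith)
    -- conclude: integrand is ⊤ on a set of positive measure
    refine top_le_iff.mp ?_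
    calc (⊤ : ℝ≥0∞) = ⊤ * σ s := (ENNReal.top_mul hσs.ne').symm
      _ = ∫⁻ _ in s, (⊤ : ℝ≥0∞) ∂σ := by rw [setLIntegral_const]
      _ ≤ ∫⁻ ξ in s, (∫⁻ r in Ioi (1 : ℝ), ENNReal.ofReal (r ^ p * q r ξ)) ∂σ := by
          apply lintegral_mono_ae
          filter_upwards [ae_restrict_mem hs_meas, ae_restrict_of_ae hg_ae]
            with ξ hξs hξg
          have hc : 0 < c₂ ξ := hξg ▸ hξs
          rw [hinner ξ hc]
      _ ≤ ∫⁻ ξ, (∫⁻ r in Ioi (1 : ℝ), ENNReal.ofReal (r ^ p * q r ξ)) ∂σ :=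
          setLIntegral_le_lintegral _ _
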